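/- Tucker structure of the generalized liquid association tensor under the dimension reduction model: Let Γ₁ ∈ ℝ^{p₁×r₁}, Γ₂ ∈ ℝ^{p₂×r₂}, Γ₃ ∈ ℝ^{p₃×r₃} be matrices and f : ℝ^{r₃} → ℝ^{r₁×r₂} be differentiable, and define g : ℝ^{p₃} → ℝ^{p₁×p₂} by g(z) = Γ₁ f(Γ₃ᵀz) Γ₂ᵀ. Let Z be a random vector in ℝ^{p₃} such that every (∂f_{ab}/∂u_c)(Γ₃ᵀZ) is integrable. Then the tensor Φ with entries Φ[i,j,k] = E[(∂g_{ij}/∂z_k)(Z)] satisfies Φ[i,j,k] = Σ_{a,b,c} Γ₁[i,a]·C[a,b,c]·Γ₂[j,b]·Γ₃[k,c], where C is the r₁×r₂×r₃ tensor with entries C[a,b,c] = E[(∂f_{ab}/∂u_c)(Γ₃ᵀZ)]. Equivalently, Φ = C ×₁ Γ₁ ×₂ Γ₂ ×₃ Γ₃. -/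

import Mathlib

open MeasureTheory ProbabilityTheory Matrix

/-- Tucker structure of the generalized liquid association tensor under the dimension
reduction model: if `g(z) = Γ₁ f(Γ₃ᵀ z) Γ₂ᵀ` with `f` differentiable, then the tensor
`Φ[i,j,k] = E[∂g_ij/∂z_k (Z)]` satisfies `Φ = C ×₁ Γ₁ ×₂ Γ₂ ×₃ Γ₃`, where
`C[a,b,c] = E[∂f_ab/∂u_c (Γ₃ᵀ Z)]`. -/
theorem gla_tucker_structure {Ω : Type*} [MeasurableSpace Ω]
    (P : Measure Ω) [IsProbabilityMeasure P] {p₁ p₂ p₃ r₁ r₂ r₃ : ℕ}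
    (Γ₁ : Matrix (Fin p₁) (Fin r₁) ℝ) (Γ₂ : Matrix (Fin p₂) (Fin r₂) ℝ)
    (Γ₃ : Matrix (Fin p₃) (Fin r₃) ℝ)
    (f : (Fin r₃ → ℝ) → Matrix (Fin r₁) (Fin r₂) ℝ)
    (hfd : ∀ a b, Differentiable ℝ (fun u => f u a b))
    (g : (Fin p₃ → ℝ) → Matrix (Fin p₁) (Fin p₂) ℝ)
    (hg : ∀ z, g z = Γ₁ * f (Γ₃ᵀ.mulVec z) * Γ₂ᵀ)
    (Z : Ω → Fin p₃ → ℝ) (hZ : Measurable Z)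
    (hfint : ∀ a b c, Integrable
      (fun ω => fderiv ℝ (fun u => f u a b) (Γ₃ᵀ.mulVec (Z ω)) (Pi.single c 1)) P)
    (Φ : Fin p₁ → Fin p₂ → Fin p₃ → ℝ)
    (hΦ : ∀ i j k, Φ i j k = ∫ ω, fderiv ℝ (fun z => g z i j) (Z ω) (Pi.single k 1) ∂P)
    (C : Fin r₁ → Fin r₂ → Fin r₃ → ℝ)
    (hC : ∀ a b c, C a b c =
      ∫ ω, fderiv ℝ (fun u => f u a b) (Γ₃ᵀ.mulVec (Z ω)) (Pi.single c 1) ∂P) :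
    ∀ i j k, Φ i j k =
      ∑ a : Fin r₁, ∑ b : Fin r₂, ∑ c : Fin r₃,
        Γ₁ i a * C a b c * Γ₂ j b * Γ₃ k c := by
  intro i j k
  set L : (Fin p₃ → ℝ) →L[ℝ] (Fin r₃ → ℝ) :=
    LinearMap.toContinuousLinearMap (Matrix.mulVecLin Γ₃ᵀ) with hL
  have hLapp : ∀ z, L z = Γ₃ᵀ.mulVec z := fun z => rfl
  -- derivative of g at any point, in direction single k 1
  have key : ∀ z₀ : Fin p₃ → ℝ,
      fderiv ℝ (fun z => g z i j) z₀ (Pi.single k 1) =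
      ∑ b : Fin r₂, ∑ a : Fin r₁, ∑ c : Fin r₃,
        Γ₁ i a * Γ₂ j b * Γ₃ k c *
          fderiv ℝ (fun u => f u a b) (Γ₃ᵀ.mulVec z₀) (Pi.single c 1) := by
    intro z₀
    have hidem : (fun z => g z i j) =
        fun z => ∑ b : Fin r₂, ∑ a : Fin r₁,
          Γ₁ i a * f (L z) a b * Γ₂ j b := by
      funext z
      rw [hg z]
      simp [Matrix.mul_apply, Finset.sum_mul, hLapp, Matrix.transpose_apply]
    have hD : HasFDerivAt (fun z => g z i j)
        (∑ b : Fin r₂, ∑ a : Fin r₁,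
          (Γ₁ i a * Γ₂ j b) • ((fderiv ℝ (fun u => f u a b) (L z₀)).comp L)) z₀ := by
      rw [hidem]
      apply HasFDerivAt.fun_sum
      intro b _
      apply HasFDerivAt.fun_sum
      intro a _
      have h1 : HasFDerivAt (fun u => f u a b)
          (fderiv ℝ (fun u => f u a b) (L z₀)) (L z₀) :=
        (hfd a b (L z₀)).hasFDerivAt
      have h2 : HasFDerivAt (fun z => f (L z) a b)
          ((fderiv ℝ (fun u => f u a b) (L z₀)).comp L) z₀ :=
        h1.comp z₀ (L.hasFDerivAt)
      have h3 := (h2.const_mul (Γ₁ i a)).mul_const (Γ₂ j b)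
      refine h3.congr_fderiv ?_
      ext v
      simp [ContinuousLinearMap.smul_apply]
      ring
    rw [hD.fderiv]
    rw [ContinuousLinearMap.sum_apply]
    refine Finset.sum_congr rfl fun b _ => ?_
    rw [ContinuousLinearMap.sum_apply]
    refine Finset.sum_congr rfl fun a _ => ?_
    have hLk : L (Pi.single k 1) = ∑ c : Fin r₃, Γ₃ k c • (Pi.single c 1 : Fin r₃ → ℝ) := by
      funext c
      simp [hLapp, Matrix.mulVec, dotProduct, Matrix.transpose_apply,
        Finset.sum_apply, Pi.single_apply, mul_comm]
    simp only [ContinuousLinearMap.smul_apply, ContinuousLinearMap.comp_apply, hLk,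
      map_sum, hLapp, Finset.smul_sum]
    refine Finset.sum_congr rfl fun c _ => ?_
    rw [ContinuousLinearMap.map_smul]
    simp only [smul_eq_mul]
    ring
  rw [hΦ i j k]
  simp only [key]
  rw [integral_finset_sum _ (fun b _ => integrable_finset_sum _ fun a _ =>
    integrable_finset_sum _ fun c _ => ((hfint a b c).const_mul _))]
  have step : ∀ b : Fin r₂,
      (∫ ω, ∑ a : Fin r₁, ∑ c : Fin r₃, Γ₁ i a * Γ₂ j b * Γ₃ k c *
        fderiv ℝ (fun u => f u a b) (Γ₃ᵀ.mulVec (Z ω)) (Pi.single c 1) ∂P) =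
      ∑ a : Fin r₁, ∑ c : Fin r₃, Γ₁ i a * Γ₂ j b * Γ₃ k c * C a b c := by
    intro b
    rw [integral_finset_sum _ (fun a _ =>
      integrable_finset_sum _ fun c _ => ((hfint a b c).const_mul _))]
    refine Finset.sum_congr rfl fun a _ => ?_
    rw [integral_finset_sum _ (fun c _ => ((hfint a b c).const_mul _))]
    refine Finset.sum_congr rfl fun c _ => ?_
    rw [integral_const_mul, hC a b c]
  simp only [step]
  rw [Finset.sum_comm]
  refine Finset.sum_congr rfl fun a _ => Finset.sum_congr rfl fun b _ =>
    Finset.sum_congr rfl fun c _ => by ring
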